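/- Let Ψ : (0,∞) → (0,∞) be a continuous increasing bijection satisfying C⁻¹ (R/r)^{β₁} ≤ Ψ(R)/Ψ(r) ≤ C (R/r)^{β₂} for all 0 < r ≤ R, with constants 1 < β₁ < β₂ and C > 1. Define Φ(s) = sup_{r>0} (s/r − 1/Ψ(r)). Then there exists a constant C₁ > 0 such that C₁⁻¹ (S/s)^{β₂/(β₂−1)} ≤ Φ(S)/Φ(s) ≤ C₁ (S/s)^{β₁/(β₁−1)} for all 0 < s ≤ S. -/

import Mathlib

open Real Set


/-- The Legendre-type transform `Φ(s) = sup_{r>0} (s/r - 1/Ψ(r))` of a scale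
function `Ψ`. -/
noncomputable def Phi (Ψ : ℝ → ℝ) (s : ℝ) : ℝ :=
  sSup {t : ℝ | ∃ r > (0:ℝ), t = s / r - 1 / Ψ r}

/-- two-sided power growth of `Φ`. -/
lemma exists_rho (Ψ : ℝ → ℝ) (C β₁ β₂ : ℝ) (hC : 1 < C) (hβ₁ : 1 < β₁)
    (hΨpos : ∀ r > (0:ℝ), 0 < Ψ r)
    (hΨcont : ContinuousOn Ψ (Set.Ioi 0))
    (hreg : ∀ r R : ℝ, 0 < r → r ≤ R →
      C⁻¹ * (R/r)^β₁ ≤ Ψ R / Ψ r ∧ Ψ R / Ψ r ≤ C * (R/r)^β₂)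
    (s : ℝ) (hs : 0 < s) : ∃ ρ > (0:ℝ), Ψ ρ * s = 2 * ρ := by
  have hC0 : (0:ℝ) < C := lt_trans one_pos hC
  have hψ1 : 0 < Ψ 1 := hΨpos 1 one_pos
  set e := β₁ - 1 with he_def
  have he : 0 < e := by simp [he_def]; linarith
  set a : ℝ := min 1 ((2/(s*C*Ψ 1)) ^ (1/e)) with ha_def
  set b : ℝ := max 1 ((2*C/(s*Ψ 1)) ^ (1/e)) with hb_def
  have ha0 : 0 < a := by
    apply lt_min one_pos
    positivity
  have ha1 : a ≤ 1 := min_le_left _ _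
  have hb1 : (1:ℝ) ≤ b := le_max_left _ _
  have hb0 : 0 < b := lt_of_lt_of_le one_pos hb1
  have hab : a ≤ b := le_trans ha1 hb1
  -- a ^ e ≤ 2/(s*C*Ψ 1)
  have haux : a ^ e ≤ 2/(s*C*Ψ 1) := by
    have h1 : a ≤ (2/(s*C*Ψ 1)) ^ (1/e) := min_le_right _ _
    have h2 : a ^ e ≤ ((2/(s*C*Ψ 1)) ^ (1/e)) ^ e :=
      Real.rpow_le_rpow ha0.le h1 he.le
    rwa [← Real.rpow_mul (by positivity), one_div, inv_mul_cancel₀ he.ne',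
      Real.rpow_one] at h2
  have haux2 : 2*C/(s*Ψ 1) ≤ b ^ e := by
    have h1 : (2*C/(s*Ψ 1)) ^ (1/e) ≤ b := le_max_right _ _
    have h2 : ((2*C/(s*Ψ 1)) ^ (1/e)) ^ e ≤ b ^ e :=
      Real.rpow_le_rpow (by positivity) h1 he.le
    rwa [← Real.rpow_mul (by positivity), one_div, inv_mul_cancel₀ he.ne',
      Real.rpow_one] at h2
  -- Ψ a / a ≤ 2/s
  have hΨa : 0 < Ψ a := hΨpos a ha0
  have hga : Ψ a / a ≤ 2/s := by
    have hr := (hreg a 1 ha0 ha1).1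
    have hP : (0:ℝ) < (1/a)^β₁ := by positivity
    have hPa : (1/a)^β₁ * a^β₁ = 1 := by
      rw [← Real.mul_rpow (by positivity) ha0.le, one_div, inv_mul_cancel₀ ha0.ne',
        Real.one_rpow]
    -- Ψ a ≤ C * Ψ 1 * a ^ β₁
    have h3 : Ψ a * (1/a)^β₁ ≤ C * Ψ 1 := by
      rw [le_div_iff₀ hΨa, mul_assoc, inv_mul_le_iff₀ hC0] at hr
      nlinarith [hr]
    have h4 : Ψ a ≤ C * Ψ 1 * a ^ β₁ := by
      have := mul_le_mul_of_nonneg_right h3 (Real.rpow_nonneg ha0.le β₁)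
      rw [mul_assoc, hPa, mul_one] at this
      linarith [this]
    have h5 : a ^ β₁ / a = a ^ e := by
      rw [he_def, Real.rpow_sub ha0, Real.rpow_one]
    calc Ψ a / a ≤ C * Ψ 1 * a ^ β₁ / a := by gcongr
      _ = C * Ψ 1 * a ^ e := by rw [mul_div_assoc, h5]
      _ ≤ C * Ψ 1 * (2/(s*C*Ψ 1)) := by
          apply mul_le_mul_of_nonneg_left haux (by positivity)
      _ = 2/s := by field_simp
  -- 2/s ≤ Ψ b / b
  have hgb : 2/s ≤ Ψ b / b := by
    have hr := (hreg 1 b one_pos hb1).1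
    rw [div_one] at hr
    have h4 : C⁻¹ * Ψ 1 * b ^ β₁ ≤ Ψ b := by
      rw [le_div_iff₀ hψ1] at hr
      nlinarith [hr]
    have h5 : b ^ β₁ / b = b ^ e := by
      rw [he_def, Real.rpow_sub hb0, Real.rpow_one]
    calc (2:ℝ)/s = C⁻¹ * Ψ 1 * (2*C/(s*Ψ 1)) := by field_simp
      _ ≤ C⁻¹ * Ψ 1 * b ^ e := by
          apply mul_le_mul_of_nonneg_left haux2 (by positivity)
      _ = C⁻¹ * Ψ 1 * b ^ β₁ / b := by rw [mul_div_assoc, h5]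
      _ ≤ Ψ b / b := by gcongr
  -- IVT
  have hsub : Icc a b ⊆ Ioi (0:ℝ) := fun x hx => lt_of_lt_of_le ha0 hx.1
  have hgcont : ContinuousOn (fun r => Ψ r / r) (Icc a b) := by
    apply ContinuousOn.div (hΨcont.mono hsub) continuousOn_id
    exact fun x hx => ne_of_gt (hsub hx)
  have hmem : (2/s) ∈ Icc ((fun r => Ψ r / r) a) ((fun r => Ψ r / r) b) := ⟨hga, hgb⟩
  obtain ⟨ρ, hρmem, hρeq⟩ := intermediate_value_Icc hab hgcont hmem
  have hρ0 : 0 < ρ := hsub hρmem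
  refine ⟨ρ, hρ0, ?_⟩
  have : Ψ ρ / ρ = 2 / s := hρeq
  field_simp at this
  linarith [this]

lemma phi_bounds (Ψ : ℝ → ℝ) (C β₁ β₂ : ℝ) (hC : 1 < C) (hβ₁ : 1 < β₁)
    (hΨpos : ∀ r > (0:ℝ), 0 < Ψ r)
    (hreg : ∀ r R : ℝ, 0 < r → r ≤ R →
      C⁻¹ * (R/r)^β₁ ≤ Ψ R / Ψ r ∧ Ψ R / Ψ r ≤ C * (R/r)^β₂)
    (s ρ : ℝ) (hs : 0 < s) (hρ : 0 < ρ) (heq : Ψ ρ * s = 2 * ρ) :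
    s/(2*ρ) ≤ Phi Ψ s ∧ Phi Ψ s ≤ (2*C)^(1/(β₁-1)) * (s/ρ) := by
  have hC0 : (0:ℝ) < C := lt_trans one_pos hC
  have he : (0:ℝ) < β₁ - 1 := by linarith
  set m := (2*C)^(1/(β₁-1)) with hm_def
  have hm1 : (1:ℝ) ≤ m := Real.one_le_rpow (by linarith) (by positivity)
  have hm0 : (0:ℝ) < m := lt_of_lt_of_le one_pos hm1
  have hme : m ^ (β₁-1) = 2*C := by
    rw [hm_def, ← Real.rpow_mul (by positivity), one_div,
      inv_mul_cancel₀ he.ne', Real.rpow_one]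
  have hΨρ : 0 < Ψ ρ := hΨpos ρ hρ
  have hub : ∀ t ∈ {t : ℝ | ∃ r > (0:ℝ), t = s / r - 1 / Ψ r}, t ≤ m * (s/ρ) := by
    rintro t ⟨r, hr, rfl⟩
    have hΨr : 0 < Ψ r := hΨpos r hr
    rcases le_total r (ρ/m) with hcase | hcase
    · -- small r : the term is nonpositive
      have hrρ : r ≤ ρ := hcase.trans (by
        calc ρ/m ≤ ρ/1 := by gcongr
          _ = ρ := div_one ρ)
      have hx : r/ρ ≤ m⁻¹ := by
        calc r/ρ ≤ (ρ/m)/ρ := by gcongr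
          _ = m⁻¹ := by field_simp
      have hx2 : (r/ρ)^(β₁-1) ≤ (2*C)⁻¹ := by
        have h1 : (r/ρ)^(β₁-1) ≤ (m⁻¹)^(β₁-1) :=
          Real.rpow_le_rpow (by positivity) hx he.le
        rwa [Real.inv_rpow hm0.le, hme] at h1
      have hreg1 := (hreg r ρ hr hrρ).1
      rw [le_div_iff₀ hΨr, mul_assoc, inv_mul_le_iff₀ hC0] at hreg1
      have hprod : (ρ/r)^β₁ * (r/ρ)^β₁ = 1 := by
        rw [← Real.mul_rpow (by positivity) (by positivity),
          show (ρ/r) * (r/ρ) = 1 from by field_simp, Real.one_rpow]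
      have key := mul_le_mul_of_nonneg_right hreg1 (Real.rpow_nonneg (div_pos hr hρ).le β₁)
      have lhs_eq : (ρ/r)^β₁ * Ψ r * (r/ρ)^β₁ = Ψ r := by
        rw [mul_right_comm, hprod, one_mul]
      rw [lhs_eq] at key
      have hsplit : (r/ρ)^β₁ = (r/ρ)^(β₁-1) * (r/ρ) := by
        nth_rewrite 1 [show β₁ = (β₁-1)+1 from by ring]
        rw [Real.rpow_add (by positivity), Real.rpow_one]
      have hkey2 : s * Ψ r ≤ r := by
        calc s * Ψ r ≤ s * (C * Ψ ρ * (r/ρ)^β₁) := by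
              exact mul_le_mul_of_nonneg_left key hs.le
          _ = 2*C*ρ*((r/ρ)^(β₁-1) * (r/ρ)) := by
              rw [hsplit]
              linear_combination (C * ((r/ρ)^(β₁-1) * (r/ρ))) * heq
          _ ≤ 2*C*ρ*((2*C)⁻¹ * (r/ρ)) := by
              have hrρ0 : (0:ℝ) ≤ r/ρ := by positivity
              gcongr
          _ = r := by field_simp
      have hlt : s/r ≤ 1/Ψ r := by
        rw [div_le_div_iff₀ hr hΨr]; linarith
      have hnn : (0:ℝ) ≤ m * (s/ρ) := by positivity
      linarith
    · -- large r :
      have hrm : 0 < ρ/m := by positivity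
      have h1 : s/r - 1/Ψ r ≤ s/r := by
        have : (0:ℝ) ≤ 1/Ψ r := by positivity
        linarith
      have h2 : s/r ≤ s/(ρ/m) := by gcongr
      have h3 : s/(ρ/m) = m * (s/ρ) := by field_simp
      linarith
  have hne : ({t : ℝ | ∃ r > (0:ℝ), t = s / r - 1 / Ψ r}).Nonempty :=
    ⟨s/1 - 1/Ψ 1, 1, one_pos, rfl⟩
  have hbdd : BddAbove {t : ℝ | ∃ r > (0:ℝ), t = s / r - 1 / Ψ r} := ⟨m*(s/ρ), hub⟩
  constructor
  · have hmem : s/ρ - 1/Ψ ρ ∈ {t : ℝ | ∃ r > (0:ℝ), t = s / r - 1 / Ψ r} := ⟨ρ, hρ, rfl⟩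
    have hle := le_csSup hbdd hmem
    have h1ψ : 1/Ψ ρ = s/(2*ρ) := by
      rw [div_eq_div_iff hΨρ.ne' (by positivity)]
      linarith
    rw [h1ψ] at hle
    have : s/ρ - s/(2*ρ) = s/(2*ρ) := by ring
    rw [this] at hle
    exact hle
  · exact csSup_le hne hub

lemma rho_ratio (Ψ : ℝ → ℝ) (C β₁ β₂ : ℝ) (hC : 1 < C) (hβ₁ : 1 < β₁) (hβ : β₁ < β₂)
    (hΨpos : ∀ r > (0:ℝ), 0 < Ψ r)
    (hreg : ∀ r R : ℝ, 0 < r → r ≤ R →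
      C⁻¹ * (R/r)^β₁ ≤ Ψ R / Ψ r ∧ Ψ R / Ψ r ≤ C * (R/r)^β₂)
    (s S ρs ρS : ℝ) (hs : 0 < s) (hsS : s ≤ S) (hρs : 0 < ρs) (hρS : 0 < ρS)
    (heqs : Ψ ρs * s = 2 * ρs) (heqS : Ψ ρS * S = 2 * ρS) :
    (S/s)^(1/(β₂-1)) / C^(1/(β₁-1)) ≤ ρs/ρS ∧
      ρs/ρS ≤ C^(1/(β₁-1)) * (S/s)^(1/(β₁-1)) := by
  have hC0 : (0:ℝ) < C := lt_trans one_pos hC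
  have hS : 0 < S := lt_of_lt_of_le hs hsS
  have he₁ : (0:ℝ) < β₁ - 1 := by linarith
  have he₂ : (0:ℝ) < β₂ - 1 := by linarith
  set D := C^(1/(β₁-1)) with hD_def
  have hD1 : (1:ℝ) ≤ D := Real.one_le_rpow hC.le (by positivity)
  have hD0 : (0:ℝ) < D := lt_of_lt_of_le one_pos hD1
  have hee : 1/(β₂-1) ≤ 1/(β₁-1) := by
    apply one_div_le_one_div_of_le he₁ (by linarith)
  have hD2 : C^(1/(β₂-1)) ≤ D := Real.rpow_le_rpow_of_exponent_le hC.le hee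
  set lam := S/s with hlam_def
  have hlam1 : (1:ℝ) ≤ lam := (one_le_div hs).2 hsS
  have hlam0 : (0:ℝ) < lam := lt_of_lt_of_le one_pos hlam1
  have hΨρs : 0 < Ψ ρs := hΨpos ρs hρs
  have hΨρS : 0 < Ψ ρS := hΨpos ρS hρS
  rcases le_total ρS ρs with hord | hord
  · -- ρS ≤ ρs
    have hx0 : (0:ℝ) < ρs/ρS := by positivity
    have hr := hreg ρS ρs hρS hord
    have hratio : Ψ ρs / Ψ ρS = lam * (ρs/ρS) := by
      rw [div_eq_iff hΨρS.ne', hlam_def]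
      field_simp
      nlinarith [heqs, heqS]
    rw [hratio] at hr
    constructor
    · -- lower bound from hr.2
      have h1 : lam ≤ C * (ρs/ρS)^(β₂-1) := by
        have h2 := hr.2
        have hsplit : (ρs/ρS)^β₂ = (ρs/ρS)^(β₂-1) * (ρs/ρS) := by
          nth_rewrite 1 [show β₂ = (β₂-1)+1 from by ring]
          rw [Real.rpow_add hx0, Real.rpow_one]
        rw [hsplit] at h2
        have := le_of_mul_le_mul_right (by linarith [h2] : lam * (ρs/ρS) ≤ (C * (ρs/ρS)^(β₂-1)) * (ρs/ρS)) hx0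
        linarith
      have h3 : lam / C ≤ (ρs/ρS)^(β₂-1) := by
        rw [div_le_iff₀ hC0]; linarith
      have h4 : (lam/C)^(1/(β₂-1)) ≤ ρs/ρS := by
        have h5 := Real.rpow_le_rpow (by positivity) h3 (by positivity : (0:ℝ) ≤ 1/(β₂-1))
        rwa [← Real.rpow_mul hx0.le, mul_one_div, div_self he₂.ne', Real.rpow_one] at h5
      have h6 : lam^(1/(β₂-1)) / D ≤ (lam/C)^(1/(β₂-1)) := by
        rw [Real.div_rpow hlam0.le hC0.le]
        gcongr
      linarith
    · -- upper bound from hr.1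
      have h1 : (ρs/ρS)^(β₁-1) ≤ C * lam := by
        have h2 := hr.1
        have hsplit : (ρs/ρS)^β₁ = (ρs/ρS)^(β₁-1) * (ρs/ρS) := by
          nth_rewrite 1 [show β₁ = (β₁-1)+1 from by ring]
          rw [Real.rpow_add hx0, Real.rpow_one]
        rw [hsplit, inv_mul_le_iff₀ hC0] at h2
        have h3 : (ρs/ρS)^(β₁-1) * (ρs/ρS) ≤ C*lam*(ρs/ρS) := by
          rw [mul_assoc]; exact h2
        exact le_of_mul_le_mul_right h3 hx0
      have h4 : ρs/ρS ≤ (C*lam)^(1/(β₁-1)) := by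
        have h5 := Real.rpow_le_rpow (by positivity) h1 (by positivity : (0:ℝ) ≤ 1/(β₁-1))
        rwa [← Real.rpow_mul hx0.le, mul_one_div, div_self he₁.ne', Real.rpow_one] at h5
      rwa [Real.mul_rpow hC0.le hlam0.le] at h4
  · -- ρs ≤ ρS
    have hy0 : (0:ℝ) < ρS/ρs := by positivity
    have hr := (hreg ρs ρS hρs hord).1
    have hratio : Ψ ρS / Ψ ρs = (ρS/ρs) / lam := by
      rw [div_eq_div_iff hΨρs.ne' hlam0.ne', hlam_def]
      field_simp
      nlinarith [heqs, heqS]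
    rw [hratio] at hr
    have hy1 : (1:ℝ) ≤ ρS/ρs := (one_le_div hρs).2 hord
    have h1 : (ρS/ρs)^(β₁-1) * lam ≤ C := by
      have hsplit : (ρS/ρs)^β₁ = (ρS/ρs)^(β₁-1) * (ρS/ρs) := by
        nth_rewrite 1 [show β₁ = (β₁-1)+1 from by ring]
        rw [Real.rpow_add hy0, Real.rpow_one]
      rw [hsplit, inv_mul_le_iff₀ hC0] at hr
      have h2 := mul_le_mul_of_nonneg_right hr hlam0.le
      have h3 : ((ρS/ρs)^(β₁-1) * lam) * (ρS/ρs) ≤ C * (ρS/ρs) := by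
        calc ((ρS/ρs)^(β₁-1) * lam) * (ρS/ρs)
            = ((ρS/ρs)^(β₁-1) * (ρS/ρs)) * lam := by ring
          _ ≤ (C * (ρS/ρs/lam)) * lam := h2
          _ = C * (ρS/ρs) := by field_simp
      exact le_of_mul_le_mul_right h3 hy0
    have hyE1 : (1:ℝ) ≤ (ρS/ρs)^(β₁-1) := Real.one_le_rpow hy1 he₁.le
    have hlamC : lam ≤ C := by
      calc lam = 1 * lam := (one_mul lam).symm
        _ ≤ (ρS/ρs)^(β₁-1) * lam := mul_le_mul_of_nonneg_right hyE1 hlam0.le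
        _ ≤ C := h1
    have hy2 : (ρS/ρs)^(β₁-1) ≤ C/lam := by
      rw [le_div_iff₀ hlam0]; linarith
    have hy3 : ρS/ρs ≤ (C/lam)^(1/(β₁-1)) := by
      have h5 := Real.rpow_le_rpow (by positivity) hy2 (by positivity : (0:ℝ) ≤ 1/(β₁-1))
      rwa [← Real.rpow_mul hy0.le, mul_one_div, div_self he₁.ne', Real.rpow_one] at h5
    constructor
    · -- lower bound
      have h6 : (lam/C)^(1/(β₁-1)) ≤ ρs/ρS := by
        have h7 := inv_anti₀ hy0 hy3
        rwa [← Real.inv_rpow (by positivity : (0:ℝ) ≤ C/lam), inv_div, inv_div] at h7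
      have h8 : lam^(1/(β₂-1))/D ≤ (lam/C)^(1/(β₁-1)) := by
        have h9 : (lam/C)^(1/(β₁-1)) = lam^(1/(β₁-1))/D := by
          rw [Real.div_rpow hlam0.le hC0.le, hD_def]
        rw [h9]
        have h10 : lam^(1/(β₂-1)) ≤ lam^(1/(β₁-1)) :=
          Real.rpow_le_rpow_of_exponent_le hlam1 hee
        gcongr
      linarith
    · -- upper bound : ρs/ρS ≤ 1 ≤ D * lam^(1/(β₁-1))
      have h6 : ρs/ρS ≤ 1 := by
        rw [div_le_one hρS]; exact hord
      have h7 : (1:ℝ) ≤ lam^(1/(β₁-1)) := Real.one_le_rpow hlam1 (by positivity)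
      have h8 : (1:ℝ) ≤ D * lam^(1/(β₁-1)) := by
        calc (1:ℝ) = 1*1 := by ring
          _ ≤ D * lam^(1/(β₁-1)) := mul_le_mul hD1 h7 one_pos.le hD0.le
      linarith

theorem stmt11 (Ψ : ℝ → ℝ) (C β₁ β₂ : ℝ) (hC : 1 < C) (hβ₁ : 1 < β₁) (hβ : β₁ < β₂)
    (hΨpos : ∀ r > (0:ℝ), 0 < Ψ r)
    (hΨmono : StrictMonoOn Ψ (Set.Ioi 0))
    (hΨcont : ContinuousOn Ψ (Set.Ioi 0))
    (hΨsurj : ∀ y > (0:ℝ), ∃ r > (0:ℝ), Ψ r = y)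
    (hreg : ∀ r R : ℝ, 0 < r → r ≤ R →
      C⁻¹ * (R/r)^β₁ ≤ Ψ R / Ψ r ∧ Ψ R / Ψ r ≤ C * (R/r)^β₂) :
    ∃ C₁ > (0:ℝ), ∀ s S : ℝ, 0 < s → s ≤ S →
      C₁⁻¹ * (S/s)^(β₂/(β₂-1)) ≤ Phi Ψ S / Phi Ψ s ∧
      Phi Ψ S / Phi Ψ s ≤ C₁ * (S/s)^(β₁/(β₁-1)) := by
  have hC0 : (0:ℝ) < C := lt_trans one_pos hC
  have he₁ : (0:ℝ) < β₁ - 1 := by linarith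
  have he₂ : (0:ℝ) < β₂ - 1 := by linarith
  obtain ⟨m, hm_def⟩ : ∃ m : ℝ, m = (2*C)^(1/(β₁-1)) := ⟨_, rfl⟩
  obtain ⟨D, hD_def⟩ : ∃ D : ℝ, D = C^(1/(β₁-1)) := ⟨_, rfl⟩
  have hm1 : (1:ℝ) ≤ m := hm_def ▸ Real.one_le_rpow (by linarith) (by positivity)
  have hm0 : (0:ℝ) < m := lt_of_lt_of_le one_pos hm1
  have hD1 : (1:ℝ) ≤ D := hD_def ▸ Real.one_le_rpow hC.le (by positivity)
  have hD0 : (0:ℝ) < D := lt_of_lt_of_le one_pos hD1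
  refine ⟨2*m*D, by positivity, ?_⟩
  intro s S hs hsS
  have hS : 0 < S := lt_of_lt_of_le hs hsS
  obtain ⟨ρs, hρs, heqs⟩ := exists_rho Ψ C β₁ β₂ hC hβ₁ hΨpos hΨcont hreg s hs
  obtain ⟨ρS, hρS, heqS⟩ := exists_rho Ψ C β₁ β₂ hC hβ₁ hΨpos hΨcont hreg S hS
  obtain ⟨hlb_s, hub_s⟩ := phi_bounds Ψ C β₁ β₂ hC hβ₁ hΨpos hreg s ρs hs hρs heqs
  obtain ⟨hlb_S, hub_S⟩ := phi_bounds Ψ C β₁ β₂ hC hβ₁ hΨpos hreg S ρS hS hρS heqS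
  obtain ⟨hrr1, hrr2⟩ := rho_ratio Ψ C β₁ β₂ hC hβ₁ hβ hΨpos hreg s S ρs ρS hs hsS hρs hρS heqs heqS
  rw [← hm_def] at hub_s hub_S
  rw [← hD_def] at hrr1 hrr2
  have hΦs0 : 0 < Phi Ψ s := lt_of_lt_of_le (by positivity) hlb_s
  have hΦS0 : 0 < Phi Ψ S := lt_of_lt_of_le (by positivity) hlb_S
  have hlam0 : 0 < S/s := by positivity
  have hq₂ : (S/s)^(β₂/(β₂-1)) = (S/s) * (S/s)^(1/(β₂-1)) := by
    nth_rewrite 1 [show β₂/(β₂-1) = 1 + 1/(β₂-1) from by field_simp; ring]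
    rw [Real.rpow_add hlam0, Real.rpow_one]
  have hq₁ : (S/s)^(β₁/(β₁-1)) = (S/s) * (S/s)^(1/(β₁-1)) := by
    nth_rewrite 1 [show β₁/(β₁-1) = 1 + 1/(β₁-1) from by field_simp; ring]
    rw [Real.rpow_add hlam0, Real.rpow_one]
  constructor
  · -- lower bound
    rw [le_div_iff₀ hΦs0, hq₂]
    have ht : (0:ℝ) ≤ (S/s)*(s/(2*ρs)) := by positivity
    have h2 := mul_le_mul_of_nonneg_left hrr1 ht
    have eL : (S/s)*(s/(2*ρs)) * ((S/s)^(1/(β₂-1))/D) =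
        (2*m*D)⁻¹ * ((S/s)*(S/s)^(1/(β₂-1))) * (m*(s/ρs)) := by
      field_simp
      try ring
    have eR : (S/s)*(s/(2*ρs)) * (ρs/ρS) = S/(2*ρS) := by
      field_simp
      try ring
    rw [eL, eR] at h2
    have hnn : (0:ℝ) ≤ (2*m*D)⁻¹ * ((S/s)*(S/s)^(1/(β₂-1))) := by
      exact mul_nonneg (inv_nonneg.2 (mul_nonneg (mul_nonneg (by norm_num) hm0.le) hD0.le)) (by positivity)
    have h3 := mul_le_mul_of_nonneg_left hub_s hnn
    calc (2*m*D)⁻¹ * ((S/s)*(S/s)^(1/(β₂-1))) * Phi Ψ s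
        ≤ (2*m*D)⁻¹ * ((S/s)*(S/s)^(1/(β₂-1))) * (m*(s/ρs)) := h3
      _ ≤ S/(2*ρS) := h2
      _ ≤ Phi Ψ S := hlb_S
  · -- upper bound
    rw [div_le_iff₀ hΦs0, hq₁]
    have ht : (0:ℝ) ≤ m*(S/s)*(s/ρs) := by
      apply mul_nonneg (mul_nonneg hm0.le (by positivity)) (by positivity)
    have h2 := mul_le_mul_of_nonneg_left hrr2 ht
    have eL : m*(S/s)*(s/ρs) * (ρs/ρS) = m*(S/ρS) := by
      field_simp
      try ring
    have eR : m*(S/s)*(s/ρs) * (D*(S/s)^(1/(β₁-1))) =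
        2*m*D*((S/s)*(S/s)^(1/(β₁-1))) * (s/(2*ρs)) := by
      field_simp
      try ring
    rw [eL, eR] at h2
    have hnn : (0:ℝ) ≤ 2*m*D*((S/s)*(S/s)^(1/(β₁-1))) := by
      exact mul_nonneg (mul_nonneg (mul_nonneg (by norm_num) hm0.le) hD0.le) (by positivity)
    have h3 := mul_le_mul_of_nonneg_left hlb_s hnn
    calc Phi Ψ S ≤ m*(S/ρS) := hub_S
      _ ≤ 2*m*D*((S/s)*(S/s)^(1/(β₁-1))) * (s/(2*ρs)) := h2
      _ ≤ 2*m*D*((S/s)*(S/s)^(1/(β₁-1))) * Phi Ψ s := h3
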